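/- Every QN eigenvalue ω of an admissible cavity ε satisfies Im ω < 0, i.e., the decay rate β = -Im ω is strictly positive. -/

import Mathlib

open Set
open MeasureTheory Complex


lemma qn_unique_zero {l : ℝ} (hl : 0 < l) (μ : ℂ) {ε : ℝ → ℝ} {ε₂ : ℝ}
    (hεb : ∀ s, |ε s| ≤ ε₂)
    {E E' : ℝ → ℂ}
    (hE : ∀ s ∈ Icc (0:ℝ) l, HasDerivAt E (E' s) s)
    (hE' : ∀ s ∈ Icc (0:ℝ) l, HasDerivAt E' (μ * (ε s : ℂ) * E s) s)
    (hEl : E l = 0) (hE'l : E' l = 0) : ∀ s ∈ Icc (0:ℝ) l, E s = 0 := by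
  set v : ℝ → ℂ × ℂ → ℂ × ℂ := fun t p => (p.2, μ * (ε t : ℂ) * p.1) with hv
  have hε₂0 : 0 ≤ ε₂ := le_trans (abs_nonneg _) (hεb 0)
  set Kr : ℝ := max 1 (‖μ‖ * ε₂) with hKr
  have hKr1 : (1:ℝ) ≤ Kr := le_max_left _ _
  have hKr0 : 0 ≤ Kr := le_trans zero_le_one hKr1
  have hlip : ∀ t, LipschitzOnWith Kr.toNNReal (v t) univ := by
    intro t
    apply LipschitzWith.lipschitzOnWith
    apply LipschitzWith.of_dist_le_mul
    intro p q
    rw [Real.coe_toNNReal _ hKr0]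
    have hd : 0 ≤ dist p q := dist_nonneg
    have hfst : dist p.1 q.1 ≤ dist p q := by
      rw [Prod.dist_eq]; exact le_max_left _ _
    have hsnd : dist p.2 q.2 ≤ dist p q := by
      rw [Prod.dist_eq]; exact le_max_right _ _
    have hvp : dist (v t p) (v t q) =
        max (dist p.2 q.2) (dist (μ * (ε t : ℂ) * p.1) (μ * (ε t : ℂ) * q.1)) := by
      rw [Prod.dist_eq]
    rw [hvp]
    apply max_le
    · nlinarith
    · have h1 : dist (μ * (ε t : ℂ) * p.1) (μ * (ε t : ℂ) * q.1)
          ≤ ‖μ * (ε t : ℂ)‖ * dist p.1 q.1 := by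
        rw [dist_eq_norm, dist_eq_norm, ← mul_sub]
        exact norm_mul_le _ _
      have h2 : ‖μ * (ε t : ℂ)‖ ≤ Kr := by
        rw [norm_mul]
        have h3 : ‖(ε t : ℂ)‖ = |ε t| := by
          rw [Complex.norm_real, Real.norm_eq_abs]
        rw [h3]
        calc ‖μ‖ * |ε t| ≤ ‖μ‖ * ε₂ :=
              mul_le_mul_of_nonneg_left (hεb t) (norm_nonneg μ)
          _ ≤ Kr := le_max_right _ _
      have h4 : 0 ≤ ‖μ * (ε t : ℂ)‖ := norm_nonneg _
      nlinarith [dist_nonneg (x := p.1) (y := q.1)]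
  have key : EqOn (fun t => (E t, E' t)) (fun _ : ℝ => ((0:ℂ), (0:ℂ))) (Icc 0 l) := by
    apply ODE_solution_unique_of_mem_Icc_left (fun t _ => hlip t)
    · exact ContinuousOn.prodMk
        (fun s hs => (hE s hs).continuousAt.continuousWithinAt)
        (fun s hs => (hE' s hs).continuousAt.continuousWithinAt)
    · intro t ht
      exact (((hE t (Ioc_subset_Icc_self ht)).prodMk
        (hE' t (Ioc_subset_Icc_self ht))).hasDerivWithinAt)
    · exact fun t _ => mem_univ _
    · exact continuousOn_const
    · intro t ht
      have h5 : HasDerivWithinAt (fun _ : ℝ => ((0:ℂ), (0:ℂ))) 0 (Iic t) t :=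
        (hasDerivAt_const _ _).hasDerivWithinAt
      convert h5 using 1
      case e'_9 => simp [v]
      all_goals rfl
    · exact fun t _ => mem_univ _
    · simp [hEl, hE'l]
  intro s hs
  have := key hs
  simpa using congrArg Prod.fst this


/-- Every QN eigenvalue `ω` of an admissible cavity satisfies `Im ω < 0`:
the decay rate `β = -Im ω` is strictly positive. -/
theorem QN_eigenvalue_im_neg
    (l c ε₁ ε₂ εoo : ℝ) (hl : 0 < l) (hc : 0 < c)
    (hε₁ : 1 ≤ ε₁) (h12 : ε₁ < ε₂) (hεoo : 1 ≤ εoo)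
    (ε : ℝ → ℝ) (hεb : ∀ s, ε₁ ≤ ε s ∧ ε s ≤ ε₂)
    (ω : ℂ) (hω : ω ≠ 0)
    (E E' : ℝ → ℂ)
    (hE : ∀ s ∈ Icc (0 : ℝ) l, HasDerivAt E (E' s) s)
    (hE' : ∀ s ∈ Icc (0 : ℝ) l,
      HasDerivAt E' (-(ω ^ 2 / (c : ℂ) ^ 2) * (ε s : ℂ) * E s) s)
    (h0 : E 0 = 0)
    (hbc : Complex.I * ω * ((Real.sqrt εoo / c : ℝ) : ℂ) * E l = E' l)
    (hnontriv : ∃ s ∈ Icc (0 : ℝ) l, E s ≠ 0) :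
    ω.im < 0 := by
  by_contra hcon
  push_neg at hcon
  have hc0 : (c : ℂ) ≠ 0 := by exact_mod_cast hc.ne'
  have hμ0 : -(ω ^ 2 / (c : ℂ) ^ 2) ≠ 0 := by
    simp only [neg_ne_zero, div_ne_zero_iff]
    exact ⟨pow_ne_zero _ hω, pow_ne_zero _ hc0⟩
  set μ : ℂ := -(ω ^ 2 / (c : ℂ) ^ 2) with hμdef
  set k : ℝ := Real.sqrt εoo / c with hkdef
  have hk0 : 0 < k := div_pos (Real.sqrt_pos.2 (lt_of_lt_of_le one_pos hεoo)) hc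
  -- continuity
  have hEc : ContinuousOn E (Icc 0 l) := fun s hs => (hE s hs).continuousAt.continuousWithinAt
  have hE'c : ContinuousOn E' (Icc 0 l) := fun s hs => (hE' s hs).continuousAt.continuousWithinAt
  obtain ⟨C, hC⟩ := isCompact_Icc.exists_bound_of_continuousOn hEc
  have hC0 : 0 ≤ C := le_trans (norm_nonneg (E 0)) (hC 0 (left_mem_Icc.mpr hl.le))
  set h : ℝ → ℂ := fun s => μ * (ε s : ℂ) * E s with hhdef
  -- measurability of h on (0, l]
  have hmeas : AEStronglyMeasurable h (volume.restrict (Ioc 0 l)) := by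
    refine ((measurable_deriv E').aestronglyMeasurable.restrict).congr ?_
    refine (ae_restrict_iff' measurableSet_Ioc).2 (Filter.Eventually.of_forall ?_)
    intro s hs
    exact (hE' s (Ioc_subset_Icc_self hs)).deriv
  -- integrability of h * conj E
  have hint1 : IntegrableOn (fun s => h s * (starRingEnd ℂ) (E s)) (Ioc 0 l) volume := by
    have hconjE : AEStronglyMeasurable (fun s => (starRingEnd ℂ) (E s))
        (volume.restrict (Ioc 0 l)) := by
      apply ContinuousOn.aestronglyMeasurable _ measurableSet_Ioc
      exact Complex.continuous_conj.comp_continuousOn (hEc.mono Ioc_subset_Icc_self)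
    refine ⟨hmeas.mul hconjE, ?_⟩
    apply HasFiniteIntegral.restrict_of_bounded (C := ‖μ‖ * ε₂ * C * C) measure_Ioc_lt_top
    refine (ae_restrict_iff' measurableSet_Ioc).2 (Filter.Eventually.of_forall ?_)
    intro s hs
    have hsI : s ∈ Icc (0:ℝ) l := Ioc_subset_Icc_self hs
    have h1 : ‖h s * (starRingEnd ℂ) (E s)‖ = ‖μ‖ * |ε s| * ‖E s‖ * ‖E s‖ := by
      rw [norm_mul, hhdef]
      simp only [norm_mul, Complex.norm_real, Real.norm_eq_abs, RCLike.norm_conj]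
    rw [h1]
    have hε2 : |ε s| ≤ ε₂ := by
      rw [abs_of_pos (lt_of_lt_of_le (lt_of_lt_of_le one_pos hε₁) (hεb s).1)]
      exact (hεb s).2
    have hEs := hC s hsI
    have hn := norm_nonneg (E s)
    have hε₂0 : (0:ℝ) ≤ ε₂ := by linarith
    gcongr <;>
      first
        | assumption
        | positivity
        | exact mul_nonneg (mul_nonneg (norm_nonneg μ) hε₂0) hC0
        | exact mul_nonneg (norm_nonneg μ) hε₂0
  have hint1' : IntervalIntegrable (fun s => h s * (starRingEnd ℂ) (E s)) volume 0 l :=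
    (intervalIntegrable_iff_integrableOn_Ioc_of_le hl.le).2 hint1
  have hint2' : IntervalIntegrable (fun s => E' s * (starRingEnd ℂ) (E' s)) volume 0 l := by
    apply ContinuousOn.intervalIntegrable
    rw [uIcc_of_le hl.le]
    exact hE'c.mul (Complex.continuous_conj.comp_continuousOn hE'c)
  -- FTC
  have hFTC : (∫ s in (0:ℝ)..l, (h s * (starRingEnd ℂ) (E s) + E' s * (starRingEnd ℂ) (E' s)))
      = E' l * (starRingEnd ℂ) (E l) - E' 0 * (starRingEnd ℂ) (E 0) := by
    apply intervalIntegral.integral_eq_sub_of_hasDerivAt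
    · intro s hs
      rw [uIcc_of_le hl.le] at hs
      have hd := (hE' s hs).mul (hE s hs).star
      exact hd
    · exact hint1'.add hint2'
  set A : ℝ := ∫ s in (0:ℝ)..l, ε s * Complex.normSq (E s) with hAdef
  set B : ℝ := ∫ s in (0:ℝ)..l, Complex.normSq (E' s) with hBdef
  set M : ℝ := Complex.normSq (E l) with hMdef
  have hsplit : (∫ s in (0:ℝ)..l, (h s * (starRingEnd ℂ) (E s) + E' s * (starRingEnd ℂ) (E' s)))
      = μ * (A : ℂ) + (B : ℂ) := by
    rw [intervalIntegral.integral_add hint1' hint2']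
    congr 1
    · have heq : ∀ s, h s * (starRingEnd ℂ) (E s)
          = μ * ((ε s * Complex.normSq (E s) : ℝ) : ℂ) := by
        intro s
        show μ * (ε s : ℂ) * E s * (starRingEnd ℂ) (E s)
          = μ * ((ε s * Complex.normSq (E s) : ℝ) : ℂ)
        push_cast
        rw [← Complex.mul_conj]
        ring
      simp_rw [heq]
      rw [intervalIntegral.integral_const_mul, intervalIntegral.integral_ofReal]
    · simp_rw [Complex.mul_conj]
      rw [intervalIntegral.integral_ofReal]
  have hid : Complex.I * ω * (k : ℂ) * (M : ℂ) = μ * (A : ℂ) + (B : ℂ) := by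
    have h1 : E' l * (starRingEnd ℂ) (E l) - E' 0 * (starRingEnd ℂ) (E 0)
        = Complex.I * ω * (k : ℂ) * (M : ℂ) := by
      rw [h0, ← hbc, hMdef, map_zero, mul_zero, sub_zero, mul_assoc, Complex.mul_conj]
    rw [← h1, ← hFTC, hsplit]
  -- A > 0
  have hint3 : IntervalIntegrable (fun s => ε s * Complex.normSq (E s)) volume 0 l := by
    have heq : (fun s => ε s * Complex.normSq (E s))
        = fun s => (μ⁻¹ * (h s * (starRingEnd ℂ) (E s))).re := by
      funext s
      have h2 : μ⁻¹ * (h s * (starRingEnd ℂ) (E s))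
          = ((ε s * Complex.normSq (E s) : ℝ) : ℂ) := by
        show μ⁻¹ * (μ * (ε s : ℂ) * E s * (starRingEnd ℂ) (E s))
          = ((ε s * Complex.normSq (E s) : ℝ) : ℂ)
        push_cast
        rw [← Complex.mul_conj]
        field_simp
      rw [h2, Complex.ofReal_re]
    rw [heq]
    apply (intervalIntegrable_iff_integrableOn_Ioc_of_le hl.le).2
    exact (hint1.const_mul μ⁻¹).re
  have hintE : IntervalIntegrable (fun s => Complex.normSq (E s)) volume 0 l := by
    apply ContinuousOn.intervalIntegrable
    rw [uIcc_of_le hl.le]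
    exact Complex.continuous_normSq.comp_continuousOn hEc
  have hposE : 0 < ∫ s in (0:ℝ)..l, Complex.normSq (E s) := by
    obtain ⟨s₀, hs₀, hs₀ne⟩ := hnontriv
    exact intervalIntegral.integral_pos hl
      (Complex.continuous_normSq.comp_continuousOn hEc)
      (fun x _ => Complex.normSq_nonneg _)
      ⟨s₀, hs₀, Complex.normSq_pos.2 hs₀ne⟩
  have hA0 : 0 < A := by
    refine lt_of_lt_of_le hposE (intervalIntegral.integral_mono_on hl.le hintE hint3 ?_)
    intro x _
    nlinarith [Complex.normSq_nonneg (E x), (hεb x).1, hε₁]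
  have hB0 : 0 ≤ B := intervalIntegral.integral_nonneg hl.le fun u _ => Complex.normSq_nonneg _
  have hM0 : 0 ≤ M := Complex.normSq_nonneg _
  -- extract real and imaginary parts
  have hc20 : ((c:ℂ))^2 ≠ 0 := pow_ne_zero _ hc0
  rw [hμdef] at hid
  have hid2 : Complex.I * ω * (k : ℂ) * (M : ℂ) * (c:ℂ)^2 + ω^2 * (A:ℂ) = (B:ℂ) * (c:ℂ)^2 := by
    field_simp at hid
    linear_combination hid
  have hre := congrArg Complex.re hid2
  have him := congrArg Complex.im hid2
  simp only [pow_two, Complex.add_re, Complex.add_im, Complex.mul_re, Complex.mul_im,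
    Complex.I_re, Complex.I_im, Complex.ofReal_re, Complex.ofReal_im] at hre him
  ring_nf at hre him
  have hcsimp : ∀ x : ℝ, x * c ^ 2 * c⁻¹ = x * c := by
    intro x; field_simp
  have hkc : k * c ^ 2 = Real.sqrt εoo * c := by
    rw [hkdef, div_mul_eq_mul_div, div_eq_iff hc.ne']; ring
  replace hre : ω.re ^ 2 * A - ω.im * Real.sqrt εoo * M * c - ω.im ^ 2 * A = c ^ 2 * B := by
    linear_combination hre + ω.im * M * hkc
  replace him : ω.re * ω.im * A * 2 + ω.re * Real.sqrt εoo * c * M = 0 := by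
    linear_combination him - ω.re * M * hkc
  have hse : 0 < Real.sqrt εoo := Real.sqrt_pos.2 (lt_of_lt_of_le one_pos hεoo)
  set a := ω.re with hadef
  set b := ω.im with hbdef
  -- case analysis
  rcases eq_or_ne a 0 with ha | ha
  · have hb : b ≠ 0 := by
      intro hb0
      exact hω (Complex.ext ha hb0)
    have hbpos : 0 < b := lt_of_le_of_ne hcon (Ne.symm hb)
    rw [ha] at hre
    nlinarith [mul_nonneg (mul_nonneg (mul_nonneg hbpos.le hse.le) hc.le) hM0,
      mul_pos (mul_pos hbpos hbpos) hA0,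
      mul_nonneg (mul_pos hc hc).le hB0]
  · -- from imaginary part: √εoo*c*M + 2bA = 0 hence M = 0
    have him2 : a * (Real.sqrt εoo * c * M + 2 * (b * A)) = 0 := by
      linear_combination him
    have him3 : Real.sqrt εoo * c * M + 2 * (b * A) = 0 := by
      rcases mul_eq_zero.1 him2 with h' | h'
      · exact absurd h' ha
      · exact h'
    have hMz : M = 0 := by
      nlinarith [mul_pos hse hc, mul_nonneg hcon hA0.le,
        mul_nonneg (mul_pos hse hc).le hM0]
    have hEl : E l = 0 := Complex.normSq_eq_zero.1 hMz
    have hE'l : E' l = 0 := by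
      rw [← hbc, hEl, mul_zero]
    obtain ⟨s₀, hs₀, hs₀ne⟩ := hnontriv
    refine hs₀ne ?_
    refine qn_unique_zero hl μ (ε := ε) (ε₂ := ε₂) ?_ hE hE' hEl hE'l s₀ hs₀
    intro s
    rw [abs_of_pos (lt_of_lt_of_le (lt_of_lt_of_le one_pos hε₁) (hεb s).1)]
    exact (hεb s).2
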